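/- (Additional power required under covariance mismatch.) Let Σ, Σ̂ be real symmetric positive semidefinite n×n matrices with eigenvalues λ₁ ≥ ⋯ ≥ λ_n and λ̂₁ ≥ ⋯ ≥ λ̂_n respectively, where Σ has rank s ≥ 1 (so λ_s > 0 and λ_k = 0 for k > s). Let σ > 0 and χ > 0, and let 1 ≤ K ≤ s be such that λ_k ≥ χ for k ≤ K and λ_k < χ for K < k ≤ n. Suppose δ₀ := ‖Σ̂ − Σ‖ ≤ χ/4^{s+1}, and set δ_s = 4^s·δ₀. Define P_ideal = Σ_{k=1}^{K} σ²(1/χ − 1/λ_k) and P_mismatch = Σ_{k ≤ s, λ̂_k > χ − δ_s} σ²(1/(χ − δ_s) − 1/λ̂_k). Then P_mismatch < P_ideal + [ (20/51)·s + (1/272)·K ]·σ²/χ. -/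

import Mathlib

open MeasureTheory ProbabilityTheory Matrix BigOperators

/-- Spectral (ℓ²-operator) norm of a real square matrix. -/
noncomputable def specNorm {n : ℕ} (A : Matrix (Fin n) (Fin n) ℝ) : ℝ :=
  ‖LinearMap.toContinuousLinearMap (Matrix.toEuclideanLin A)‖

section Aux

local notation "⟪" x ", " y "⟫" => inner (𝕜 := ℝ) x y

variable {n : ℕ}

lemma aux_inner_eq_sum_repr (b : OrthonormalBasis (Fin n) ℝ (EuclideanSpace ℝ (Fin n)))
    (x y : EuclideanSpace ℝ (Fin n)) :
    ⟪x, y⟫ = ∑ i, b.repr x i * b.repr y i := by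
  rw [← b.sum_inner_mul_inner x y]
  refine Finset.sum_congr rfl fun i _ => ?_
  rw [b.repr_apply_apply, b.repr_apply_apply, real_inner_comm]

lemma aux_repr_eq_zero_of_mem_span (b : OrthonormalBasis (Fin n) ℝ (EuclideanSpace ℝ (Fin n)))
    (I : Finset (Fin n)) {x : EuclideanSpace ℝ (Fin n)}
    (hx : x ∈ Submodule.span ℝ (b '' I)) {j : Fin n} (hj : j ∉ I) :
    b.repr x j = 0 := by
  rw [b.repr_apply_apply]
  have hle : Submodule.span ℝ (b '' I) ≤
      LinearMap.ker ((innerSL ℝ (b j) : EuclideanSpace ℝ (Fin n) →L[ℝ] ℝ) :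
        EuclideanSpace ℝ (Fin n) →ₗ[ℝ] ℝ) := by
    rw [Submodule.span_le]
    rintro _ ⟨i, hi, rfl⟩
    have : i ≠ j := by rintro rfl; exact hj hi
    simpa [LinearMap.mem_ker] using b.orthonormal.2 (Ne.symm this)
  exact hle hx

lemma aux_inner_self_eq_sum_sq (b : OrthonormalBasis (Fin n) ℝ (EuclideanSpace ℝ (Fin n)))
    (x : EuclideanSpace ℝ (Fin n)) :
    ‖x‖ ^ 2 = ∑ i, (b.repr x i) ^ 2 := by
  rw [← real_inner_self_eq_norm_sq, aux_inner_eq_sum_repr b x x]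
  simp [sq]

lemma aux_inner_map_eq_sum (T : EuclideanSpace ℝ (Fin n) →ₗ[ℝ] EuclideanSpace ℝ (Fin n))
    (hT : T.IsSymmetric) (b : OrthonormalBasis (Fin n) ℝ (EuclideanSpace ℝ (Fin n)))
    (μ : Fin n → ℝ) (hTb : ∀ i, T (b i) = μ i • b i) (x : EuclideanSpace ℝ (Fin n)) :
    ⟪x, T x⟫ = ∑ i, μ i * (b.repr x i) ^ 2 := by
  rw [aux_inner_eq_sum_repr b x (T x)]
  refine Finset.sum_congr rfl fun i _ => ?_
  have : b.repr (T x) i = μ i * b.repr x i := by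
    rw [b.repr_apply_apply, b.repr_apply_apply, ← hT (b i) x, hTb i, real_inner_smul_left]
  rw [this]; ring

lemma aux_qf_le (T : EuclideanSpace ℝ (Fin n) →ₗ[ℝ] EuclideanSpace ℝ (Fin n))
    (hT : T.IsSymmetric) (b : OrthonormalBasis (Fin n) ℝ (EuclideanSpace ℝ (Fin n)))
    (μ : Fin n → ℝ) (hTb : ∀ i, T (b i) = μ i • b i) (I : Finset (Fin n)) (c : ℝ)
    (hc : ∀ i ∈ I, μ i ≤ c) {x : EuclideanSpace ℝ (Fin n)}
    (hx : x ∈ Submodule.span ℝ (b '' I)) :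
    ⟪x, T x⟫ ≤ c * ‖x‖ ^ 2 := by
  rw [aux_inner_map_eq_sum T hT b μ hTb, aux_inner_self_eq_sum_sq b, Finset.mul_sum]
  refine Finset.sum_le_sum fun i _ => ?_
  by_cases hi : i ∈ I
  · nlinarith [hc i hi, sq_nonneg (b.repr x i)]
  · rw [aux_repr_eq_zero_of_mem_span b I hx hi]; simp

lemma aux_qf_ge (T : EuclideanSpace ℝ (Fin n) →ₗ[ℝ] EuclideanSpace ℝ (Fin n))
    (hT : T.IsSymmetric) (b : OrthonormalBasis (Fin n) ℝ (EuclideanSpace ℝ (Fin n)))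
    (μ : Fin n → ℝ) (hTb : ∀ i, T (b i) = μ i • b i) (I : Finset (Fin n)) (c : ℝ)
    (hc : ∀ i ∈ I, c ≤ μ i) {x : EuclideanSpace ℝ (Fin n)}
    (hx : x ∈ Submodule.span ℝ (b '' I)) :
    c * ‖x‖ ^ 2 ≤ ⟪x, T x⟫ := by
  rw [aux_inner_map_eq_sum T hT b μ hTb, aux_inner_self_eq_sum_sq b, Finset.mul_sum]
  refine Finset.sum_le_sum fun i _ => ?_
  by_cases hi : i ∈ I
  · nlinarith [hc i hi, sq_nonneg (b.repr x i)]
  · rw [aux_repr_eq_zero_of_mem_span b I hx hi]; simp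

lemma aux_finrank_span_orthonormal (b : OrthonormalBasis (Fin n) ℝ (EuclideanSpace ℝ (Fin n)))
    (I : Finset (Fin n)) :
    Module.finrank ℝ (Submodule.span ℝ (b '' I)) = I.card := by
  have hli : LinearIndependent ℝ (fun i : I => b i) :=
    b.orthonormal.linearIndependent.comp _ Subtype.val_injective
  have : (b '' I) = Set.range (fun i : I => b i) := by
    ext y; simp [Set.range, Subtype.exists]
  rw [this, finrank_span_eq_card hli]
  simp

lemma aux_toEuclideanLin_eigen {A : Matrix (Fin n) (Fin n) ℝ} (hA : A.IsHermitian) (j : Fin n) :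
    Matrix.toEuclideanLin A (hA.eigenvectorBasis j) =
      hA.eigenvalues j • hA.eigenvectorBasis j := by
  apply (WithLp.equiv 2 (Fin n → ℝ)).injective
  exact hA.mulVec_eigenvectorBasis j

/-- One-sided Weyl inequality for decreasingly-ordered eigenvalue enumerations. -/
lemma aux_weyl {A B : Matrix (Fin n) (Fin n) ℝ} (hA : A.IsHermitian) (hB : B.IsHermitian)
    (lam lamhat : Fin n → ℝ) (hlam_anti : Antitone lam) (hlamhat_anti : Antitone lamhat)
    (e f : Equiv.Perm (Fin n)) (hlam : ∀ i, lam i = hA.eigenvalues (e i))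
    (hlamhat : ∀ i, lamhat i = hB.eigenvalues (f i)) (k : Fin n) :
    lamhat k ≤ lam k + specNorm (B - A) := by
  classical
  set b : OrthonormalBasis (Fin n) ℝ (EuclideanSpace ℝ (Fin n)) :=
    hA.eigenvectorBasis.reindex e.symm with hb
  set c : OrthonormalBasis (Fin n) ℝ (EuclideanSpace ℝ (Fin n)) :=
    hB.eigenvectorBasis.reindex f.symm with hc
  have hbi : ∀ i, Matrix.toEuclideanLin A (b i) = lam i • b i := by
    intro i
    rw [hb, OrthonormalBasis.reindex_apply, Equiv.symm_symm, hlam i]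
    exact aux_toEuclideanLin_eigen hA (e i)
  have hci : ∀ i, Matrix.toEuclideanLin B (c i) = lamhat i • c i := by
    intro i
    rw [hc, OrthonormalBasis.reindex_apply, Equiv.symm_symm, hlamhat i]
    exact aux_toEuclideanLin_eigen hB (f i)
  have hTA : (Matrix.toEuclideanLin A).IsSymmetric := Matrix.isHermitian_iff_isSymmetric.mp hA
  have hTB : (Matrix.toEuclideanLin B).IsSymmetric := Matrix.isHermitian_iff_isSymmetric.mp hB
  set V := Submodule.span ℝ (b '' (Finset.Ici k)) with hV
  set W := Submodule.span ℝ (c '' (Finset.Iic k)) with hW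
  have hdV : Module.finrank ℝ V = n - k := by
    rw [hV, aux_finrank_span_orthonormal, Fin.card_Ici]
  have hdW : Module.finrank ℝ W = k + 1 := by
    rw [hW, aux_finrank_span_orthonormal, Fin.card_Iic]
  have hinter : ∃ x : EuclideanSpace ℝ (Fin n), x ∈ V ⊓ W ∧ x ≠ 0 := by
    have h1 : Module.finrank ℝ (V ⊔ W : Submodule ℝ (EuclideanSpace ℝ (Fin n))) ≤ n := by
      simpa [finrank_euclideanSpace] using (V ⊔ W).finrank_le
    have h2 := Submodule.finrank_sup_add_finrank_inf_eq V W
    have hpos : 0 < Module.finrank ℝ (V ⊓ W : Submodule ℝ (EuclideanSpace ℝ (Fin n))) := by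
      have hk : (k : ℕ) < n := k.isLt
      omega
    haveI := (Module.finrank_pos_iff (R := ℝ)).mp hpos
    obtain ⟨⟨x, hx⟩, hxne⟩ := exists_ne (0 : ↥(V ⊓ W))
    exact ⟨x, hx, fun h => hxne (by simpa [Subtype.ext_iff] using h)⟩
  obtain ⟨x, hx, hxne⟩ := hinter
  have hxV : x ∈ V := hx.1
  have hxW : x ∈ W := hx.2
  have hnx : 0 < ‖x‖ ^ 2 := by have := norm_pos_iff.mpr hxne; positivity
  have hge : lamhat k * ‖x‖ ^ 2 ≤ ⟪x, Matrix.toEuclideanLin B x⟫ :=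
    aux_qf_ge _ hTB c lamhat hci _ _ (fun i hi => hlamhat_anti (Finset.mem_Iic.mp hi)) hxW
  have hle : ⟪x, Matrix.toEuclideanLin A x⟫ ≤ lam k * ‖x‖ ^ 2 :=
    aux_qf_le _ hTA b lam hbi _ _ (fun i hi => hlam_anti (Finset.mem_Ici.mp hi)) hxV
  have hdelta : ⟪x, Matrix.toEuclideanLin (B - A) x⟫ ≤ specNorm (B - A) * ‖x‖ ^ 2 := by
    calc ⟪x, Matrix.toEuclideanLin (B - A) x⟫ ≤ ‖x‖ * ‖Matrix.toEuclideanLin (B - A) x‖ :=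
          real_inner_le_norm _ _
      _ ≤ ‖x‖ * (specNorm (B - A) * ‖x‖) := by
          refine mul_le_mul_of_nonneg_left ?_ (norm_nonneg x)
          exact (LinearMap.toContinuousLinearMap (Matrix.toEuclideanLin (B - A))).le_opNorm x
      _ = specNorm (B - A) * ‖x‖ ^ 2 := by ring
  have hsplit : ⟪x, Matrix.toEuclideanLin B x⟫ =
      ⟪x, Matrix.toEuclideanLin A x⟫ + ⟪x, Matrix.toEuclideanLin (B - A) x⟫ := by
    rw [map_sub]
    simp [inner_sub_right]
  nlinarith [hge, hle, hdelta, hsplit]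

lemma aux_termA {c d q L Lh : ℝ} (hc : 0 < c) (hd : 0 ≤ d) (hq : 4 ≤ q)
    (hsmall : 4 * (q * d) ≤ c) (hlam : c ≤ L) (hW : Lh ≤ L + d)
    (hcond : c - q * d < Lh) :
    1 / (c - q * d) - 1 / Lh < 1 / c - 1 / L + (19 / 48) * (1 / c) := by
  have hqd : 0 ≤ q * d := mul_nonneg (by linarith) hd
  have hapos : 0 < c - q * d := by linarith
  have hLpos : 0 < L := lt_of_lt_of_le hc hlam
  have hLhpos : 0 < Lh := lt_trans hapos hcond
  have h1 : 1 / (c - q * d) ≤ 4 / (3 * c) := by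
    rw [div_le_div_iff₀ hapos (by positivity)]
    linarith
  have h2 : 1 / L - 1 / Lh < 1 / (16 * c) := by
    rcases le_or_gt Lh L with h | h
    · have hle : 1 / L ≤ 1 / Lh := one_div_le_one_div_of_le hLhpos h
      have : 0 < 1 / (16 * c) := by positivity
      linarith
    · have hdpos : 0 < d := by linarith
      have hd16 : 16 * d ≤ c := by nlinarith
      have key : 1 / L - 1 / Lh = (Lh - L) / (L * Lh) := by
        field_simp
      have hbig : c ^ 2 < L * Lh := by nlinarith
      have c1 : (Lh - L) / (L * Lh) ≤ d / (L * Lh) :=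
        (div_le_div_iff_of_pos_right (by positivity)).mpr (by linarith)
      have c2 : d / (L * Lh) < d / c ^ 2 := div_lt_div_of_pos_left hdpos (by positivity) hbig
      have c3 : d / c ^ 2 ≤ 1 / (16 * c) := by
        rw [div_le_div_iff₀ (by positivity) (by positivity)]
        nlinarith
      linarith
  have hsum : 4 / (3 * c) + 1 / (16 * c) = 1 / c + (19 / 48) * (1 / c) := by
    field_simp; ring
  linarith

lemma aux_termB {c d q L Lh : ℝ} (hc : 0 < c) (hd : 0 ≤ d) (hq : 4 ≤ q)
    (hsmall : 4 * (q * d) ≤ c) (hlam : L < c) (hW : Lh ≤ L + d)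
    (hcond : c - q * d < Lh) :
    1 / (c - q * d) - 1 / Lh ≤ (20 / 51) * (1 / c) := by
  have hqd : 0 ≤ q * d := mul_nonneg (by linarith) hd
  have hapos : 0 < c - q * d := by linarith
  have hLhpos : 0 < Lh := lt_trans hapos hcond
  have hub : Lh < c + d := by linarith
  have h1 : 1 / (c + d) < 1 / Lh := one_div_lt_one_div_of_lt hLhpos hub
  have h2 : 1 / (c - q * d) - 1 / (c + d) ≤ (20 / 51) * (1 / c) := by
    rw [div_sub_div _ _ (ne_of_gt hapos) (by positivity), mul_one_div,
      div_le_div_iff₀ (by positivity) (by positivity)]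
    nlinarith [mul_nonneg (mul_nonneg (by linarith : (0:ℝ) ≤ q - 4) hd) hc.le,
      mul_nonneg hqd hd, sq_nonneg (q * d),
      mul_nonneg hqd (by linarith : (0:ℝ) ≤ c - 4 * (q * d)),
      mul_nonneg (mul_nonneg (by linarith : (0:ℝ) ≤ q - 4) hd) hqd]
  linarith

lemma aux_card_filter_coe_lt {n m : ℕ} (h : m ≤ n) :
    (Finset.univ.filter fun k : Fin n => (k : ℕ) < m).card = m := by
  have : (Finset.univ.filter fun k : Fin n => (k : ℕ) < m) =
      Finset.map ⟨Fin.castLE h, Fin.castLE_injective h⟩ Finset.univ := by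
    ext k
    simp only [Finset.mem_filter, Finset.mem_univ, true_and, Finset.mem_map,
      Function.Embedding.coeFn_mk]
    constructor
    · intro hk; exact ⟨⟨k, hk⟩, Fin.ext rfl⟩
    · rintro ⟨j, rfl⟩; exact j.isLt
  rw [this, Finset.card_map, Finset.card_univ, Fintype.card_fin]

end Aux

/-- Additional power required under covariance mismatch. -/
theorem stmt9 {n s K : ℕ} (hs : 1 ≤ s) (hK1 : 1 ≤ K) (hKs : K ≤ s)
    (σ χ : ℝ) (hσ : 0 < σ) (hχ : 0 < χ)
    (S Shat : Matrix (Fin n) (Fin n) ℝ) (hS : S.PosSemidef) (hShat : Shat.PosSemidef)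
    (hrank : S.rank = s)
    -- `lam` enumerates the eigenvalues of `S` in decreasing order
    (lam : Fin n → ℝ) (hlam_anti : Antitone lam)
    (hlam_eig : ∃ e : Equiv.Perm (Fin n), ∀ i, lam i = hS.1.eigenvalues (e i))
    -- `lamhat` enumerates the eigenvalues of `Shat` in decreasing order
    (lamhat : Fin n → ℝ) (hlamhat_anti : Antitone lamhat)
    (hlamhat_eig : ∃ e : Equiv.Perm (Fin n), ∀ i, lamhat i = hShat.1.eigenvalues (e i))
    -- rank-s structure: the first s eigenvalues are positive, the rest vanish
    (hpos : ∀ k : Fin n, (k : ℕ) < s → 0 < lam k)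
    (hzero : ∀ k : Fin n, s ≤ (k : ℕ) → lam k = 0)
    -- the first K eigenvalues are ≥ χ, the rest are < χ
    (habove : ∀ k : Fin n, (k : ℕ) < K → χ ≤ lam k)
    (hbelow : ∀ k : Fin n, K ≤ (k : ℕ) → lam k < χ)
    (δ0 δs : ℝ) (hδ0 : δ0 = specNorm (Shat - S)) (hδ0small : δ0 ≤ χ / 4 ^ (s + 1))
    (hδs : δs = 4 ^ s * δ0)
    (Pideal Pmismatch : ℝ)
    (hPideal : Pideal = ∑ k ∈ Finset.univ.filter (fun k : Fin n => (k : ℕ) < K),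
      σ ^ 2 * (1 / χ - 1 / lam k))
    (hPmismatch : Pmismatch = ∑ k ∈ Finset.univ.filter
        (fun k : Fin n => (k : ℕ) < s ∧ χ - δs < lamhat k),
      σ ^ 2 * (1 / (χ - δs) - 1 / lamhat k)) :
    Pmismatch < Pideal + ((20 / 51) * s + (1 / 272) * K) * σ ^ 2 / χ := by
  obtain ⟨e, he⟩ := hlam_eig
  obtain ⟨f, hf⟩ := hlamhat_eig
  have hδ0nn : 0 ≤ δ0 := by rw [hδ0]; exact norm_nonneg _
  set q : ℝ := 4 ^ s with hqdef
  have hq4 : (4 : ℝ) ≤ q := by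
    calc (4 : ℝ) = 4 ^ 1 := (pow_one 4).symm
      _ ≤ 4 ^ s := pow_le_pow_right₀ (by norm_num) hs
  have hqpos : (0 : ℝ) < q := by positivity
  have hsmall : 4 * (q * δ0) ≤ χ := by
    have h4 : (0 : ℝ) < 4 ^ (s + 1) := by positivity
    have h := (le_div_iff₀ h4).mp hδ0small
    calc 4 * (q * δ0) = δ0 * 4 ^ (s + 1) := by rw [pow_succ]; ring
      _ ≤ χ := h
  have hδs' : δs = q * δ0 := hδs
  have hweyl : ∀ k : Fin n, lamhat k ≤ lam k + δ0 := fun k => by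
    rw [hδ0]
    exact aux_weyl hS.1 hShat.1 lam lamhat hlam_anti hlamhat_anti e f he hf k
  have hsn : s ≤ n := by
    have h := Matrix.rank_le_card_width S
    rw [hrank, Fintype.card_fin] at h
    exact h
  have hKn : K ≤ n := le_trans hKs hsn
  have hn0 : 0 < n := lt_of_lt_of_le hK1 hKn
  have hσ2 : (0 : ℝ) < σ ^ 2 := by positivity
  classical
  set M : Finset (Fin n) :=
    Finset.univ.filter (fun k : Fin n => (k : ℕ) < s ∧ χ - δs < lamhat k) with hM
  set AK : Finset (Fin n) := Finset.univ.filter (fun k : Fin n => (k : ℕ) < K) with hAK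
  have hsplit : Pmismatch =
      (∑ k ∈ M.filter (fun k : Fin n => (k : ℕ) < K),
        σ ^ 2 * (1 / (χ - δs) - 1 / lamhat k)) +
      (∑ k ∈ M.filter (fun k : Fin n => ¬ (k : ℕ) < K),
        σ ^ 2 * (1 / (χ - δs) - 1 / lamhat k)) := by
    rw [hPmismatch]
    exact (Finset.sum_filter_add_sum_filter_not M _ _).symm
  have hM1 : M.filter (fun k : Fin n => (k : ℕ) < K) =
      AK.filter (fun k : Fin n => (k : ℕ) < s ∧ χ - δs < lamhat k) := by
    ext k
    simp only [hM, hAK, Finset.mem_filter, Finset.mem_univ, true_and]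
    tauto
  have hcardAK : (AK.card : ℝ) = K := by
    rw [hAK, aux_card_filter_coe_lt hKn]
  -- Part 1 : the indices below K
  have h1 : (∑ k ∈ M.filter (fun k : Fin n => (k : ℕ) < K),
        σ ^ 2 * (1 / (χ - δs) - 1 / lamhat k)) <
      (∑ k ∈ AK, σ ^ 2 * (1 / χ - 1 / lam k)) + K * ((19 / 48) * (σ ^ 2 * (1 / χ))) := by
    rw [hM1, Finset.sum_filter]
    have hne : AK.Nonempty := ⟨⟨0, hn0⟩, by
      simp only [hAK, Finset.mem_filter, Finset.mem_univ, true_and]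
      exact hK1⟩
    have hlt : (∑ k ∈ AK, if (k : ℕ) < s ∧ χ - δs < lamhat k then
          σ ^ 2 * (1 / (χ - δs) - 1 / lamhat k) else 0) <
        ∑ k ∈ AK, (σ ^ 2 * (1 / χ - 1 / lam k) + (19 / 48) * (σ ^ 2 * (1 / χ))) := by
      refine Finset.sum_lt_sum_of_nonempty hne ?_
      intro k hk
      have hkK : (k : ℕ) < K := by
        simpa only [hAK, Finset.mem_filter, Finset.mem_univ, true_and] using hk
      have hlamk : χ ≤ lam k := habove k hkK
      split_ifs with hcnd
      · have hterm := aux_termA hχ hδ0nn hq4 hsmall hlamk (hweyl k)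
          (by rw [hδs'] at hcnd; exact hcnd.2)
        rw [hδs']
        calc σ ^ 2 * (1 / (χ - q * δ0) - 1 / lamhat k)
            < σ ^ 2 * ((1 / χ - 1 / lam k) + (19 / 48) * (1 / χ)) := by
              exact mul_lt_mul_of_pos_left (by linarith) hσ2
          _ = σ ^ 2 * (1 / χ - 1 / lam k) + (19 / 48) * (σ ^ 2 * (1 / χ)) := by ring
      · have hle : 1 / lam k ≤ 1 / χ := one_div_le_one_div_of_le hχ hlamk
        have h0 : 0 ≤ σ ^ 2 * (1 / χ - 1 / lam k) := mul_nonneg hσ2.le (by linarith)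
        have hpos' : 0 < (19 / 48) * (σ ^ 2 * (1 / χ)) := by positivity
        linarith
    calc (∑ k ∈ AK, if (k : ℕ) < s ∧ χ - δs < lamhat k then
          σ ^ 2 * (1 / (χ - δs) - 1 / lamhat k) else 0)
        < ∑ k ∈ AK, (σ ^ 2 * (1 / χ - 1 / lam k) + (19 / 48) * (σ ^ 2 * (1 / χ))) := hlt
      _ = (∑ k ∈ AK, σ ^ 2 * (1 / χ - 1 / lam k)) + K * ((19 / 48) * (σ ^ 2 * (1 / χ))) := by
          rw [Finset.sum_add_distrib, Finset.sum_const, nsmul_eq_mul, hcardAK]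
  -- Part 2 : the indices between K and s
  have h2 : (∑ k ∈ M.filter (fun k : Fin n => ¬ (k : ℕ) < K),
        σ ^ 2 * (1 / (χ - δs) - 1 / lamhat k)) ≤
      ((s : ℝ) - K) * ((20 / 51) * (σ ^ 2 * (1 / χ))) := by
    have hc2 : (0 : ℝ) ≤ (20 / 51) * (σ ^ 2 * (1 / χ)) := by positivity
    have hterm : ∀ k ∈ M.filter (fun k : Fin n => ¬ (k : ℕ) < K),
        σ ^ 2 * (1 / (χ - δs) - 1 / lamhat k) ≤ (20 / 51) * (σ ^ 2 * (1 / χ)) := by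
      intro k hk
      rw [hM] at hk
      simp only [Finset.mem_filter, Finset.mem_univ, true_and] at hk
      obtain ⟨⟨hks, hcnd⟩, hkK⟩ := hk
      have hlamk : lam k < χ := hbelow k (le_of_not_gt hkK)
      have hterm := aux_termB hχ hδ0nn hq4 hsmall hlamk (hweyl k)
        (by rw [hδs'] at hcnd; exact hcnd)
      rw [hδs']
      calc σ ^ 2 * (1 / (χ - q * δ0) - 1 / lamhat k)
          ≤ σ ^ 2 * ((20 / 51) * (1 / χ)) := mul_le_mul_of_nonneg_left hterm hσ2.le
        _ = (20 / 51) * (σ ^ 2 * (1 / χ)) := by ring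
    have hsum := Finset.sum_le_card_nsmul _ _ _ hterm
    have hsub : M.filter (fun k : Fin n => ¬ (k : ℕ) < K) ⊆
        Finset.univ.filter (fun k : Fin n => K ≤ (k : ℕ) ∧ (k : ℕ) < s) := by
      intro k hk
      rw [hM] at hk
      simp only [Finset.mem_filter, Finset.mem_univ, true_and] at hk ⊢
      exact ⟨le_of_not_gt hk.2, hk.1.1⟩
    have hcard2 : (Finset.univ.filter fun k : Fin n => K ≤ (k : ℕ) ∧ (k : ℕ) < s).card
        = s - K := by
      have hAeq : (Finset.univ.filter fun k : Fin n => K ≤ (k : ℕ) ∧ (k : ℕ) < s) =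
          (Finset.univ.filter fun k : Fin n => (k : ℕ) < s) \
          (Finset.univ.filter fun k : Fin n => (k : ℕ) < K) := by
        ext k
        simp only [Finset.mem_filter, Finset.mem_univ, true_and, Finset.mem_sdiff]
        omega
      rw [hAeq, Finset.card_sdiff_of_subset (by
        intro k hk
        simp only [Finset.mem_filter, Finset.mem_univ, true_and] at hk ⊢
        omega), aux_card_filter_coe_lt hsn, aux_card_filter_coe_lt hKn]
    have hcard3 : ((M.filter (fun k : Fin n => ¬ (k : ℕ) < K)).card : ℝ) ≤ (s : ℝ) - K := by
      have := Finset.card_le_card hsub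
      rw [hcard2] at this
      have hcast : ((s - K : ℕ) : ℝ) = (s : ℝ) - K := by
        rw [Nat.cast_sub hKs]
      calc ((M.filter (fun k : Fin n => ¬ (k : ℕ) < K)).card : ℝ)
          ≤ ((s - K : ℕ) : ℝ) := by exact_mod_cast this
        _ = (s : ℝ) - K := hcast
    calc (∑ k ∈ M.filter (fun k : Fin n => ¬ (k : ℕ) < K),
          σ ^ 2 * (1 / (χ - δs) - 1 / lamhat k))
        ≤ (M.filter (fun k : Fin n => ¬ (k : ℕ) < K)).card •
            ((20 / 51) * (σ ^ 2 * (1 / χ))) := hsum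
      _ = ((M.filter (fun k : Fin n => ¬ (k : ℕ) < K)).card : ℝ) *
            ((20 / 51) * (σ ^ 2 * (1 / χ))) := nsmul_eq_mul _ _
      _ ≤ ((s : ℝ) - K) * ((20 / 51) * (σ ^ 2 * (1 / χ))) :=
            mul_le_mul_of_nonneg_right hcard3 hc2
  have hfinal : (∑ k ∈ AK, σ ^ 2 * (1 / χ - 1 / lam k)) + K * ((19 / 48) * (σ ^ 2 * (1 / χ)))
      + ((s : ℝ) - K) * ((20 / 51) * (σ ^ 2 * (1 / χ)))
      = Pideal + ((20 / 51) * s + (1 / 272) * K) * σ ^ 2 / χ := by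
    rw [hPideal]
    ring
  rw [hsplit]
  linarith [h1, h2]
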